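/- arXiv:0910.2907 — 2 statements merged into one kernel-verified Lean document; each statement's English description precedes it below -/
import Mathlib

section
/- Let p be a prime with p ≡ 1 or 4 (mod 5). For all integers m ≥ 1 and n ≥ 1, if ν_p(m) = ν_p(n) (i.e., the base-p representations of m and n have the same number of trailing zeros) and s_p(m) ≡ s_p(n) (mod α(p)), then ν_p(F_m) = ν_p(F_n). -/
open Nat Finset



abbrev FM : Matrix (Fin 2) (Fin 2) ℕ := !![1,1;1,0]

lemma FM_sq : FM ^ 2 = FM + 1 := by
  ext i j
  rw [pow_two]
  fin_cases i <;> fin_cases j <;>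
    simp [Matrix.mul_apply, Fin.sum_univ_two, Matrix.one_apply]

lemma FM_pow (m : ℕ) : FM ^ (m + 1) = fib (m+1) • FM + fib m • (1 : Matrix (Fin 2) (Fin 2) ℕ) := by
  induction m with
  | zero => simp
  | succ m ih =>
    rw [pow_succ, ih, add_mul, smul_mul_assoc, smul_mul_assoc, one_mul, ← pow_two, FM_sq,
      smul_add, fib_add_two]
    module

lemma FM_entry (n : ℕ) : (FM ^ n) 0 1 = fib n := by
  cases n with
  | zero => simp
  | succ m =>
    rw [FM_pow]
    simp [Matrix.smul_apply, Matrix.add_apply, Matrix.one_apply, ← Matrix.diagonal_natCast, Matrix.diagonal_apply_ne]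

lemma fib_mul_expansion (m n : ℕ) :
    fib ((m+1) * n) = ∑ i ∈ Finset.range (n+1),
      fib (m+1) ^ i * fib m ^ (n - i) * n.choose i * fib i := by
  have hc : Commute (fib (m+1) • FM) (fib m • (1 : Matrix (Fin 2) (Fin 2) ℕ)) :=
    ((Commute.one_right FM).smul_left _).smul_right _
  have h1 : FM ^ ((m+1) * n) = ((fib (m+1) • FM + fib m • 1) : Matrix (Fin 2) (Fin 2) ℕ) ^ n := by
    rw [← FM_pow, ← pow_mul]
  rw [hc.add_pow] at h1
  have := congrArg (fun M : Matrix (Fin 2) (Fin 2) ℕ => M 0 1) h1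
  simp only [FM_entry] at this
  rw [this, Matrix.sum_apply]
  refine Finset.sum_congr rfl fun i hi => ?_
  have : (fib (m+1) • FM) ^ i * (fib m • (1:Matrix (Fin 2) (Fin 2) ℕ)) ^ (n - i) * (n.choose i : Matrix (Fin 2) (Fin 2) ℕ)
      = (fib (m+1) ^ i * fib m ^ (n-i) * n.choose i) • FM ^ i := by
    rw [smul_pow, smul_pow, one_pow, smul_mul_smul_comm, mul_one]
    have : (n.choose i : Matrix (Fin 2) (Fin 2) ℕ) = (n.choose i : ℕ) • (1 : Matrix (Fin 2) (Fin 2) ℕ) := by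
      simp [nsmul_eq_mul]
    rw [this, smul_mul_smul_comm, mul_one, mul_smul, mul_smul]
  rw [this]
  simp [Matrix.smul_apply, FM_entry, mul_assoc]


lemma padicValNat_add_eq (p t a b : ℕ) [hp : Fact p.Prime] (ha : padicValNat p a = t)
    (ha0 : a ≠ 0) (hb : p ^ (t+1) ∣ b) : padicValNat p (a + b) = t := by
  have hab : a + b ≠ 0 := by positivity
  have h1 : p ^ t ∣ a + b := by
    refine dvd_add ?_ ((pow_dvd_pow p (Nat.le_succ t)).trans hb)
    rw [← ha]; exact pow_padicValNat_dvd
  have h2 : ¬ p ^ (t+1) ∣ (a + b) := by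
    intro h
    have h3 : p ^ (t+1) ∣ a := by
      have := Nat.dvd_sub h hb
      simpa using this
    have := (padicValNat_dvd_iff_le ha0).mp h3
    omega
  have ht1 := (padicValNat_dvd_iff_le hab).mp h1
  rw [padicValNat_dvd_iff_le hab] at h2
  omega

lemma not_dvd_fib_pred {p m : ℕ} (hp : p.Prime) (h : p ∣ fib (m+1)) : ¬ p ∣ fib m := by
  intro hm
  have h2 : p ∣ Nat.gcd (fib m) (fib (m+1)) := Nat.dvd_gcd hm h
  rw [Nat.fib_coprime_fib_succ m] at h2
  have h3 := Nat.le_of_dvd one_pos h2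
  have := hp.one_lt; omega

lemma one_le_e {p M : ℕ} [hp : Fact p.Prime] (hM0 : 0 < M) (hM : p ∣ fib M) :
    1 ≤ padicValNat p (fib M) :=
  one_le_padicValNat_of_dvd (Nat.fib_pos.mpr hM0).ne' hM

lemma stepA (p M u : ℕ) [hp : Fact p.Prime] (hM0 : 0 < M) (hM : p ∣ fib M)
    (hu : ¬ p ∣ u) (hu0 : 0 < u) :
    padicValNat p (fib (M * u)) = padicValNat p (fib M) := by
  obtain ⟨m, rfl⟩ : ∃ m, M = m + 1 := ⟨M - 1, by omega⟩
  set e := padicValNat p (fib (m+1)) with he_def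
  have he : 1 ≤ e := one_le_e hM0 hM
  have hpm : ¬ p ∣ fib m := not_dvd_fib_pred hp.out hM
  rw [fib_mul_expansion]
  have h1 : (1 : ℕ) ∈ Finset.range (u+1) := by simp; omega
  rw [← Finset.add_sum_erase _ _ h1]
  have hterm : fib (m+1) ^ 1 * fib m ^ (u - 1) * u.choose 1 * fib 1
      = fib (m+1) * fib m ^ (u-1) * u := by simp
  rw [hterm]
  refine padicValNat_add_eq p e _ _ ?_ ?_ ?_
  · have hm0 : fib m ≠ 0 := fun h => hpm (h ▸ dvd_zero p)
    have hM0' : fib (m+1) ≠ 0 := (Nat.fib_pos.mpr hM0).ne'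
    rw [padicValNat.mul (by positivity) (by omega), padicValNat.mul hM0' (by positivity)]
    have h2 : padicValNat p (fib m ^ (u-1)) = 0 :=
      padicValNat.eq_zero_of_not_dvd fun h => hpm (hp.out.dvd_of_dvd_pow h)
    have h3 : padicValNat p u = 0 := padicValNat.eq_zero_of_not_dvd hu
    omega
  · have hm0 : fib m ≠ 0 := fun h => hpm (h ▸ dvd_zero p)
    have hM0' : fib (m+1) ≠ 0 := (Nat.fib_pos.mpr hM0).ne'
    positivity
  · refine Finset.dvd_sum fun i hi => ?_
    simp only [Finset.mem_erase, Finset.mem_range] at hi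
    rcases Nat.eq_zero_or_pos i with rfl | hipos
    · simp
    have hi2 : 2 ≤ i := by omega
    have hdvd : p ^ (e + 1) ∣ fib (m+1) ^ i := by
      calc p ^ (e+1) ∣ p ^ (e * i) := pow_dvd_pow p (by nlinarith)
        _ = (p ^ e) ^ i := by rw [pow_mul]
        _ ∣ fib (m+1) ^ i := pow_dvd_pow_of_dvd pow_padicValNat_dvd i
    exact dvd_mul_of_dvd_left (dvd_mul_of_dvd_left (dvd_mul_of_dvd_left hdvd _) _) _

lemma stepB (p M : ℕ) [hp : Fact p.Prime] (hp2 : p ≠ 2) (hM0 : 0 < M) (hM : p ∣ fib M) :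
    padicValNat p (fib (M * p)) = padicValNat p (fib M) + 1 := by
  obtain ⟨m, rfl⟩ : ∃ m, M = m + 1 := ⟨M - 1, by omega⟩
  set e := padicValNat p (fib (m+1)) with he_def
  have he : 1 ≤ e := one_le_e hM0 hM
  have hp3 : 3 ≤ p := by
    have := hp.out.two_le
    rcases Nat.lt_or_ge p 3 with h | h
    · interval_cases p <;> simp_all
    · exact h
  have hpm : ¬ p ∣ fib m := not_dvd_fib_pred hp.out hM
  have hm0 : fib m ≠ 0 := fun h => hpm (h ▸ dvd_zero p)
  have hM0' : fib (m+1) ≠ 0 := (Nat.fib_pos.mpr hM0).ne'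
  rw [fib_mul_expansion]
  have h1 : (1 : ℕ) ∈ Finset.range (p+1) := by simp; omega
  rw [← Finset.add_sum_erase _ _ h1]
  have hterm : fib (m+1) ^ 1 * fib m ^ (p - 1) * p.choose 1 * fib 1
      = fib (m+1) * fib m ^ (p-1) * p := by simp
  rw [hterm]
  refine padicValNat_add_eq p (e+1) _ _ ?_ ?_ ?_
  · rw [padicValNat.mul (by positivity) (by omega), padicValNat.mul hM0' (by positivity)]
    have h2 : padicValNat p (fib m ^ (p-1)) = 0 :=
      padicValNat.eq_zero_of_not_dvd fun h => hpm (hp.out.dvd_of_dvd_pow h)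
    have h3 : padicValNat p p = 1 := by
      simpa using padicValNat.prime_pow (p := p) 1
    omega
  · positivity
  · refine Finset.dvd_sum fun i hi => ?_
    simp only [Finset.mem_erase, Finset.mem_range] at hi
    rcases Nat.eq_zero_or_pos i with rfl | hipos
    · simp
    have hi2 : 2 ≤ i := by omega
    have hdvd2e : p ^ (2 * e) ∣ fib (m+1) ^ i := by
      calc p ^ (2 * e) ∣ p ^ (e * i) := pow_dvd_pow p (by nlinarith)
        _ = (p ^ e) ^ i := by rw [pow_mul]
        _ ∣ fib (m+1) ^ i := pow_dvd_pow_of_dvd pow_padicValNat_dvd i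
    rcases eq_or_ne i p with hip | hip
    · subst hip
      have hdvd : i ^ (e + 2) ∣ fib (m+1) ^ i := by
        calc i ^ (e+2) ∣ i ^ (e * i) := pow_dvd_pow i (by nlinarith)
          _ = (i ^ e) ^ i := by rw [pow_mul]
          _ ∣ fib (m+1) ^ i := pow_dvd_pow_of_dvd pow_padicValNat_dvd i
      exact dvd_mul_of_dvd_left (dvd_mul_of_dvd_left (dvd_mul_of_dvd_left hdvd _) _) _
    · have hchoose : p ∣ p.choose i := hp.out.dvd_choose_self (by omega) (by omega)
      have : p ^ (2*e) * p ∣ (fib (m+1) ^ i * fib m ^ (p - i)) * p.choose i :=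
        mul_dvd_mul (dvd_mul_of_dvd_left hdvd2e _) hchoose
      have h4 : p ^ (e + 2) ∣ (fib (m+1) ^ i * fib m ^ (p - i)) * p.choose i := by
        refine (pow_dvd_pow p (by omega : e + 2 ≤ 2*e + 1)).trans ?_
        rwa [pow_succ]
      exact dvd_mul_of_dvd_left h4 _


lemma sq_one_zmod5 : IsSquare ((1:ℕ) : ZMod 5) := by decide
lemma sq_four_zmod5 : IsSquare ((4:ℕ) : ZMod 5) := by decide

lemma five_is_square (p : ℕ) [hpf : Fact p.Prime] (h : p % 5 = 1 ∨ p % 5 = 4) :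
    IsSquare (5 : ZMod p) := by
  have hp2 : p ≠ 2 := by rintro rfl; omega
  have hp5 : p ≠ 5 := by rintro rfl; omega
  have h5 : Fact (Nat.Prime 5) := ⟨by norm_num⟩
  have h50 : ((5 : ℕ) : ZMod p) ≠ 0 := by
    rw [Ne, ZMod.natCast_eq_zero_iff]
    intro hd
    rcases (Nat.prime_dvd_prime_iff_eq hpf.out (by norm_num)).mp hd with rfl
    exact hp5 rfl
  have hrec : legendreSym p 5 = legendreSym 5 p :=
    legendreSym.quadratic_reciprocity_one_mod_four (by norm_num) hp2
  have hps : IsSquare (((p : ℤ) : ZMod 5)) := by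
    have hcast : (((p : ℤ)) : ZMod 5) = ((p % 5 : ℕ) : ZMod 5) := by
      push_cast [ZMod.natCast_mod]
      norm_cast
    rw [hcast]
    rcases h with h | h
    · rw [h]; exact sq_one_zmod5
    · rw [h]; exact sq_four_zmod5
  have hp0 : ((p : ℤ) : ZMod 5) ≠ 0 := by
    rw [Ne, show ((p:ℤ) : ZMod 5) = ((p:ℕ) : ZMod 5) by push_cast; ring,
      ZMod.natCast_eq_zero_iff]
    intro hd
    rcases (Nat.prime_dvd_prime_iff_eq (by norm_num) hpf.out).mp hd with rfl
    exact hp5 rfl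
  have h1 : legendreSym 5 p = 1 := (legendreSym.eq_one_iff 5 hp0).mpr hps
  have h2 : legendreSym p 5 = 1 := hrec.trans h1
  have := (legendreSym.eq_one_iff p (a := (5:ℤ)) (by exact_mod_cast h50)).mp h2
  simpa using this

lemma dvd_fib_card_sub_one (p : ℕ) [hpf : Fact p.Prime] (h : p % 5 = 1 ∨ p % 5 = 4) :
    p ∣ fib (p - 1) := by
  have hp2 : p ≠ 2 := by rintro rfl; omega
  have hp5 : p ≠ 5 := by rintro rfl; omega
  obtain ⟨r, hr⟩ := five_is_square p h
  set a : ZMod p := 1 + r with ha_def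
  set b : ZMod p := 1 - r with hb_def
  have hr2 : r * r = 5 := hr.symm
  have htwo : (2 : ZMod p) ≠ 0 := by
    intro h2
    have : ((2:ℕ) : ZMod p) = 0 := by exact_mod_cast h2
    rw [ZMod.natCast_eq_zero_iff] at this
    rcases (Nat.prime_dvd_prime_iff_eq hpf.out (by norm_num)).mp this with rfl
    exact hp2 rfl
  have hfive : (5 : ZMod p) ≠ 0 := by
    intro h2
    have : ((5:ℕ) : ZMod p) = 0 := by exact_mod_cast h2
    rw [ZMod.natCast_eq_zero_iff] at this
    rcases (Nat.prime_dvd_prime_iff_eq hpf.out (by norm_num)).mp this with rfl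
    exact hp5 rfl
  have hrne : r ≠ 0 := by intro h0; rw [h0] at hr2; simp at hr2; exact hfive hr2.symm
  have hab : a * b = -4 := by rw [ha_def, hb_def]; linear_combination hr
  have ha0 : a ≠ 0 := by
    intro h0; rw [h0, zero_mul] at hab
    have : (4 : ZMod p) = 0 := by linear_combination hab
    have h4 : ((4:ℕ) : ZMod p) = 0 := by exact_mod_cast this
    rw [ZMod.natCast_eq_zero_iff] at h4
    have h5' : p ∣ 2 ^ 2 := by norm_num; exact h4
    have := (Nat.prime_dvd_prime_iff_eq hpf.out (by norm_num)).mp (hpf.out.dvd_of_dvd_pow h5')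
    exact hp2 this
  have hb0 : b ≠ 0 := by
    intro h0; rw [h0, mul_zero] at hab
    have : (4 : ZMod p) = 0 := by linear_combination hab
    have h4 : ((4:ℕ) : ZMod p) = 0 := by exact_mod_cast this
    rw [ZMod.natCast_eq_zero_iff] at h4
    have h5' : p ∣ 2 ^ 2 := by norm_num; exact h4
    have := (Nat.prime_dvd_prime_iff_eq hpf.out (by norm_num)).mp (hpf.out.dvd_of_dvd_pow h5')
    exact hp2 this
  have key : ∀ n, (2 : ZMod p) ^ n * r * (fib n : ZMod p) = a ^ n - b ^ n := by
    intro n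
    induction n using Nat.strong_induction_on with
    | _ n ih =>
      match n with
      | 0 => simp
      | 1 => simp [ha_def, hb_def]; ring
      | (n+2) =>
        have h1 := ih (n+1) (by omega)
        have h0 := ih n (by omega)
        have hfa : a ^ (n+2) = 2 * a^(n+1) + 4 * a^n := by
          have ha2 : a^2 = 2*a + 4 := by rw [ha_def]; linear_combination hr2
          calc a^(n+2) = a^n * a^2 := by ring
            _ = a^n * (2*a+4) := by rw [ha2]
            _ = 2 * a^(n+1) + 4*a^n := by ring
        have hfb : b ^ (n+2) = 2 * b^(n+1) + 4 * b^n := by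
          have hb2 : b^2 = 2*b + 4 := by rw [hb_def]; linear_combination hr2
          calc b^(n+2) = b^n * b^2 := by ring
            _ = b^n * (2*b+4) := by rw [hb2]
            _ = 2 * b^(n+1) + 4*b^n := by ring
        rw [fib_add_two]
        push_cast
        rw [hfa, hfb]
        linear_combination 2 * h1 + 4 * h0
  have hap : a ^ (p-1) = 1 := ZMod.pow_card_sub_one_eq_one ha0
  have hbp : b ^ (p-1) = 1 := ZMod.pow_card_sub_one_eq_one hb0
  have h0 := key (p-1)
  rw [hap, hbp, sub_self] at h0
  have h2n : (2 : ZMod p) ^ (p-1) ≠ 0 := pow_ne_zero _ htwo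
  have : (fib (p-1) : ZMod p) = 0 := by
    rcases mul_eq_zero.mp h0 with h1 | h1
    · rcases mul_eq_zero.mp h1 with h2 | h2
      · exact absurd h2 h2n
      · exact absurd h2 hrne
    · exact h1
  rwa [ZMod.natCast_eq_zero_iff] at this


lemma fib_val_formula (p : ℕ) [hpf : Fact p.Prime] (hp2 : p ≠ 2) (α : ℕ) (hα0 : 0 < α)
    (hpα : p ∣ fib α) (k : ℕ) (hk : 0 < k) :
    padicValNat p (fib (α * k)) = padicValNat p (fib α) + padicValNat p k := by
  induction k using Nat.strong_induction_on with
  | _ k ih =>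
    by_cases hpk : p ∣ k
    · obtain ⟨k', rfl⟩ := hpk
      have hp1 := hpf.out.one_lt
      have hk' : 0 < k' := Nat.pos_of_ne_zero fun h0 => by simp [h0] at hk
      have hlt : k' < p * k' := by nlinarith
      have hM0 : 0 < α * k' := by positivity
      have hMd : p ∣ fib (α * k') := hpα.trans (fib_dvd α (α * k') ⟨k', rfl⟩)
      have h1 : α * (p * k') = (α * k') * p := by ring
      rw [h1, stepB p (α * k') hp2 hM0 hMd, ih k' hlt hk']
      have h2 : padicValNat p (p * k') = 1 + padicValNat p k' := by
        rw [padicValNat.mul (by omega) (by omega)]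
        have h3 : padicValNat p p = 1 := by
          simpa using padicValNat.prime_pow (p := p) 1
        omega
      omega
    · rw [stepA p α k hα0 hpα hpk hk, padicValNat.eq_zero_of_not_dvd hpk]
      omega

/-- The restricted period (rank of apparition) of the Fibonacci sequence modulo `p`:
the least positive `n` such that `p ∣ F n`. -/
noncomputable def fibAlpha (p : ℕ) : ℕ := sInf {n | 0 < n ∧ p ∣ Nat.fib n}

theorem nup_fib_depends_only_on_val_and_digitSum (p : ℕ) (hp : p.Prime)
    (h : p % 5 = 1 ∨ p % 5 = 4) (m n : ℕ) (hm : 1 ≤ m) (hn : 1 ≤ n)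
    (hval : padicValNat p m = padicValNat p n)
    (hsum : (Nat.digits p m).sum ≡ (Nat.digits p n).sum [MOD fibAlpha p]) :
    padicValNat p (Nat.fib m) = padicValNat p (Nat.fib n) := by
  haveI hpf : Fact p.Prime := ⟨hp⟩
  have hp2 : p ≠ 2 := by rintro rfl; omega
  have hp1 := hp.one_lt
  set α := fibAlpha p with hα_def
  have hmem : (p - 1) ∈ {n | 0 < n ∧ p ∣ Nat.fib n} :=
    ⟨by omega, dvd_fib_card_sub_one p h⟩
  have hspec : 0 < α ∧ p ∣ fib α := Nat.sInf_mem ⟨p - 1, hmem⟩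
  obtain ⟨hα0, hpα⟩ := hspec
  -- α divides n iff p ∣ fib n
  have halpha_dvd : ∀ N, α ∣ N ↔ p ∣ fib N := by
    intro N
    constructor
    · intro hd
      exact hpα.trans (fib_dvd α N hd)
    · intro hd
      have hg : p ∣ fib (Nat.gcd α N) := by
        rw [Nat.fib_gcd]
        exact Nat.dvd_gcd hpα hd
      have hg0 : 0 < Nat.gcd α N := Nat.gcd_pos_of_pos_left N hα0
      have hle : α ≤ Nat.gcd α N := Nat.sInf_le ⟨hg0, hg⟩
      have hle2 : Nat.gcd α N ≤ α := Nat.le_of_dvd hα0 (Nat.gcd_dvd_left α N)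
      have : Nat.gcd α N = α := le_antisymm hle2 hle
      rw [← this]
      exact Nat.gcd_dvd_right α N
  have hαdvd : α ∣ p - 1 := (halpha_dvd (p-1)).mpr (dvd_fib_card_sub_one p h)
  have hpnα : ¬ p ∣ α := by
    intro hd
    have h1 : p ≤ α := Nat.le_of_dvd hα0 hd
    have h2 : α ≤ p - 1 := Nat.le_of_dvd (by omega) hαdvd
    omega
  have hpmod : (1 : ℕ) ≡ p [MOD α] := (Nat.modEq_iff_dvd' (by omega)).mpr hαdvd
  have hds : ∀ N, N ≡ (Nat.digits p N).sum [MOD α] := by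
    intro N
    conv_lhs => rw [← Nat.ofDigits_digits p N]
    calc Nat.ofDigits p (Nat.digits p N)
        ≡ Nat.ofDigits 1 (Nat.digits p N) [MOD α] :=
          Nat.ofDigits_modEq' p 1 α hpmod.symm _
      _ = (Nat.digits p N).sum := Nat.ofDigits_one _
  have hmn : m ≡ n [MOD α] := ((hds m).trans hsum).trans (hds n).symm
  by_cases hd : α ∣ m
  · have hdn : α ∣ n := by
      have h0 : m ≡ 0 [MOD α] := (Nat.modEq_zero_iff_dvd).mpr hd
      exact (Nat.modEq_zero_iff_dvd).mp (hmn.symm.trans h0)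
    obtain ⟨k, rfl⟩ := hd
    obtain ⟨l, rfl⟩ := hdn
    have hk : 0 < k := Nat.pos_of_ne_zero fun h0 => by simp [h0] at hm
    have hl : 0 < l := Nat.pos_of_ne_zero fun h0 => by simp [h0] at hn
    rw [fib_val_formula p hp2 α hα0 hpα k hk, fib_val_formula p hp2 α hα0 hpα l hl]
    have hvα : padicValNat p α = 0 := padicValNat.eq_zero_of_not_dvd hpnα
    rw [padicValNat.mul (by omega) (by omega), padicValNat.mul (by omega) (by omega), hvα] at hval
    omega
  · have hdn : ¬ α ∣ n := by
      intro hdn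
      have h0 : n ≡ 0 [MOD α] := (Nat.modEq_zero_iff_dvd).mpr hdn
      exact hd ((Nat.modEq_zero_iff_dvd).mp (hmn.trans h0))
    rw [padicValNat.eq_zero_of_not_dvd (fun hc => hd ((halpha_dvd m).mpr hc)),
      padicValNat.eq_zero_of_not_dvd (fun hc => hdn ((halpha_dvd n).mpr hc))]
end

section
/- Let p be a prime with p ≡ 1 or 4 (mod 5). Then for all integers n ≥ 0, 0 ≤ i ≤ p − 1, and 0 ≤ j ≤ p − 2, one has ν_p(F_{p(pn+i)+j+1}) = ν_p(F_{pn + ((i+j) mod (p−1)) + 1}). -/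
lemma five_sq (p : ℕ) (hp : p.Prime) (h : p % 5 = 1 ∨ p % 5 = 4) :
    IsSquare (5 : ZMod p) := by
  have hp5 : p ≠ 5 := by rintro rfl; omega
  have hp2 : p ≠ 2 := by rintro rfl; omega
  haveI : Fact (Nat.Prime 5) := ⟨by norm_num⟩
  haveI : Fact p.Prime := ⟨hp⟩
  have key := (ZMod.exists_sq_eq_prime_iff_of_mod_four_eq_one (p := 5) (q := p) (by norm_num) hp2).mp
  have goal : IsSquare ((5 : ℕ) : ZMod p) := by
    apply key
    have hc : ((p : ℕ) : ZMod 5) = ((p % 5 : ℕ) : ZMod 5) := (ZMod.natCast_mod p 5).symm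
    rcases h with h | h <;> rw [hc, h]
    · exact ⟨1, by push_cast; ring⟩
    · exact ⟨2, by push_cast; norm_num⟩
  simpa using goal

lemma fib_binet {K : Type*} [CommRing K] (A B : K) (hsum : A + B = 1)
    (hprod : A * B = -1) : ∀ n : ℕ, (Nat.fib n : K) * (A - B) = A ^ n - B ^ n := by
  have hA : A ^ 2 = A + 1 := by
    have : B = 1 - A := by linear_combination hsum
    rw [this] at hprod; ring_nf; linear_combination -hprod
  have hB : B ^ 2 = B + 1 := by
    have : A = 1 - B := by linear_combination hsum
    rw [this] at hprod; ring_nf; linear_combination -hprod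
  intro n
  induction n using Nat.twoStepInduction with
  | zero => simp
  | one => simp
  | more n ih1 ih2 =>
    rw [Nat.fib_add_two]
    push_cast
    have e1 : A ^ (n + 2) = A ^ n * A ^ 2 := by ring
    have e2 : B ^ (n + 2) = B ^ n * B ^ 2 := by ring
    rw [e1, e2, hA, hB]
    linear_combination ih1 + ih2

lemma p_dvd_fib_pred (p : ℕ) (hp : p.Prime) (hsq : IsSquare (5 : ZMod p))
    (hp5 : p ≠ 5) (hp2 : p ≠ 2) : p ∣ Nat.fib (p - 1) := by
  haveI : Fact p.Prime := ⟨hp⟩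
  obtain ⟨s, hs⟩ := hsq
  have h2 : (2 : ZMod p) ≠ 0 := by
    intro hc
    have hd := (ZMod.natCast_eq_zero_iff 2 p).mp (by push_cast at hc ⊢; exact hc)
    exact hp2 ((Nat.prime_dvd_prime_iff_eq hp Nat.prime_two).mp hd)
  set A : ZMod p := (1 + s) * (2 : ZMod p)⁻¹ with hA
  set B : ZMod p := (1 - s) * (2 : ZMod p)⁻¹ with hB
  have hinv : (2 : ZMod p) * (2 : ZMod p)⁻¹ = 1 := ZMod.mul_inv_of_unit 2 (IsUnit.mk0 _ h2)
  have hsum : A + B = 1 := by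
    rw [hA, hB]; field_simp; ring
  have hprod : A * B = -1 := by
    rw [hA, hB]
    field_simp
    linear_combination hs
  have hb := fib_binet A B hsum hprod (p - 1)
  have hAB : A - B = s := by
    rw [hA, hB]; field_simp; ring
  have hs0 : s ≠ 0 := by
    intro hc
    rw [hc, mul_zero] at hs
    have h5 : ((5 : ℕ) : ZMod p) = 0 := by push_cast; exact hs
    have hd := (ZMod.natCast_eq_zero_iff 5 p).mp h5
    exact hp5 ((Nat.prime_dvd_prime_iff_eq hp (by norm_num)).mp hd)
  have hA0 : A ≠ 0 := by
    intro hc; rw [hc, zero_mul] at hprod; exact (by norm_num : (0 : ZMod p) ≠ -1) hprod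
  have hB0 : B ≠ 0 := by
    intro hc; rw [hc, mul_zero] at hprod; exact (by norm_num : (0 : ZMod p) ≠ -1) hprod
  have hAp : A ^ (p - 1) = 1 := ZMod.pow_card_sub_one_eq_one hA0
  have hBp : B ^ (p - 1) = 1 := ZMod.pow_card_sub_one_eq_one hB0
  rw [hAB, hAp, hBp, sub_self] at hb
  have : ((Nat.fib (p - 1) : ℕ) : ZMod p) = 0 := by
    rcases mul_eq_zero.mp hb with h | h
    · exact h
    · exact absurd h hs0
  exact (ZMod.natCast_eq_zero_iff _ p).mp this

lemma fib_block (k t : ℕ) : ∃ a b : ℤ,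
    (Nat.fib ((k+1)*(t+1)) : ℤ) = (t+1) * Nat.fib (k+1) * (Nat.fib (k+2) : ℤ)^t
        + (Nat.fib (k+1) : ℤ)^2 * a ∧
    (Nat.fib ((k+1)*(t+1)+1) : ℤ) = (Nat.fib (k+2) : ℤ)^(t+1) + (Nat.fib (k+1) : ℤ)^2 * b := by
  induction t with
  | zero => exact ⟨0, 0, by simp, by simp⟩
  | succ t ih =>
    obtain ⟨a, b, hA, hB⟩ := ih
    set m := (k+1)*(t+1) with hm
    have e1 : (k+1)*(t+1+1) = m + k + 1 := by rw [hm]; ring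
    have e2 : (k+1)*(t+1+1) + 1 = m + (k+1) + 1 := by rw [hm]; ring
    have hAdd1 := Nat.fib_add m k
    have hAdd2 := Nat.fib_add m (k+1)
    have hK0 : (Nat.fib k : ℤ) = (Nat.fib (k+2) : ℤ) - (Nat.fib (k+1) : ℤ) := by
      have h := Nat.fib_add_two (n := k)
      push_cast [h]; ring
    refine ⟨a * ((Nat.fib (k+2):ℤ) - (Nat.fib (k+1):ℤ)) - (t+1) * (Nat.fib (k+2):ℤ)^t
        + (Nat.fib (k+1):ℤ) * b,
      (t+1) * (Nat.fib (k+2):ℤ)^t + (Nat.fib (k+1):ℤ) * a + b * (Nat.fib (k+2):ℤ), ?_, ?_⟩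
    · rw [e1, hAdd1]
      push_cast
      linear_combination (Nat.fib k : ℤ) * hA + (Nat.fib (k+1) : ℤ) * hB
        + ((t+1) * (Nat.fib (k+1):ℤ) * (Nat.fib (k+2):ℤ)^t + (Nat.fib (k+1):ℤ)^2 * a) * hK0
    · rw [e2, hAdd2]
      push_cast
      linear_combination (Nat.fib (k+1) : ℤ) * hA + (Nat.fib (k+2) : ℤ) * hB

lemma pow_dvd_fib_rank (p a : ℕ) (hp : 2 ≤ p) (ha : 1 ≤ a) (hd : p ∣ Nat.fib a) (s : ℕ) :
    p ^ (s+1) ∣ Nat.fib (a * p ^ s) := by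
  induction s with
  | zero => simpa using hd
  | succ s ih =>
    set k := a * p ^ s with hk
    have hk1 : 1 ≤ k := by
      have h1 : 0 < p ^ s := Nat.pow_pos (n := s) (by omega)
      have h2 : 0 < a * p ^ s := Nat.mul_pos (by omega) h1
      omega
    obtain ⟨x, y, hA, -⟩ := fib_block (k-1) (p-1)
    have ek : k - 1 + 1 = k := by omega
    have ep : p - 1 + 1 = p := by omega
    have ek2 : k - 1 + 2 = k + 1 := by omega
    rw [ek, ep, ek2] at hA
    have ecoef : ((p-1 : ℕ) : ℤ) + 1 = (p : ℤ) := by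
      push_cast [Nat.cast_sub (by omega : 1 ≤ p)]; ring
    rw [ecoef] at hA
    have h1 : ((p : ℤ))^(s+1) ∣ (Nat.fib k : ℤ) := by
      exact_mod_cast Int.natCast_dvd_natCast.mpr ih
    have hdvd1 : ((p : ℤ))^(s+2) ∣ (p : ℤ) * (Nat.fib k : ℤ) * (Nat.fib (k+1) : ℤ)^(p-1) := by
      have h3 : ((p : ℤ))^(s+2) ∣ (p : ℤ) * (Nat.fib k : ℤ) := by
        rw [pow_succ, mul_comm]
        exact mul_dvd_mul dvd_rfl h1
      exact h3.mul_right _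
    have hdvd2 : ((p : ℤ))^(s+2) ∣ ((Nat.fib k : ℤ))^2 * x := by
      have h2 : ((p : ℤ))^(2*(s+1)) ∣ ((Nat.fib k : ℤ))^2 := by
        rw [two_mul, pow_add, sq]
        exact mul_dvd_mul h1 h1
      exact ((pow_dvd_pow _ (by omega : s+2 ≤ 2*(s+1))).trans h2).mul_right _
    have hfin : ((p : ℤ))^(s+2) ∣ (Nat.fib (k * p) : ℤ) := by
      rw [hA]; exact dvd_add hdvd1 hdvd2
    have efin : a * p ^ (s+1) = k * p := by rw [hk]; ring
    rw [efin]
    exact_mod_cast hfin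

theorem nup_fib_digit_shift (p : ℕ) (hp : p.Prime) (h : p % 5 = 1 ∨ p % 5 = 4)
    (n i j : ℕ) (hi : i ≤ p - 1) (hj : j ≤ p - 2) :
    padicValNat p (Nat.fib (p * (p * n + i) + j + 1)) =
      padicValNat p (Nat.fib (p * n + (i + j) % (p - 1) + 1)) := by
  haveI : Fact p.Prime := ⟨hp⟩
  have hp2 : p ≠ 2 := by rintro rfl; omega
  have hp5 : p ≠ 5 := by rintro rfl; omega
  have hple : 2 ≤ p := hp.two_le
  have hfibp : p ∣ Nat.fib (p - 1) := p_dvd_fib_pred p hp (five_sq p hp h) hp5 hp2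
  have hex : ∃ N, 0 < N ∧ p ∣ Nat.fib N := ⟨p - 1, by omega, hfibp⟩
  set α := Nat.find hex with hαdef
  obtain ⟨hαpos, hαdvd⟩ := Nat.find_spec hex
  have hrank : ∀ N : ℕ, 0 < N → (p ∣ Nat.fib N ↔ α ∣ N) := by
    intro N hN
    constructor
    · intro hdN
      have hg : p ∣ Nat.fib (Nat.gcd N α) := by
        rw [Nat.fib_gcd]; exact Nat.dvd_gcd hdN hαdvd
      have hgpos : 0 < Nat.gcd N α := Nat.gcd_pos_of_pos_left _ hN
      have hle : α ≤ Nat.gcd N α := Nat.find_min' hex ⟨hgpos, hg⟩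
      have hga : Nat.gcd N α ∣ α := Nat.gcd_dvd_right N α
      have heq : Nat.gcd N α = α := Nat.le_antisymm (Nat.le_of_dvd hαpos hga) hle
      rw [← heq]; exact Nat.gcd_dvd_left N α
    · intro hdN
      exact dvd_trans hαdvd (Nat.fib_dvd α N hdN)
  have hαp1 : α ∣ p - 1 := (hrank (p-1) (by omega)).mp hfibp
  have key : ∀ M : ℕ, 0 < M → ¬ p ∣ M → α ∣ M →
      padicValNat p (Nat.fib M) = padicValNat p (Nat.fib α) := by
    intro M hM hpM hαM
    have hfMne : Nat.fib M ≠ 0 := (Nat.fib_pos.mpr hM).ne'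
    have hfαne : Nat.fib α ≠ 0 := (Nat.fib_pos.mpr hαpos).ne'
    apply Nat.le_antisymm
    · set e := padicValNat p (Nat.fib M) with he
      rcases Nat.eq_zero_or_pos e with h0 | hepos
      · rw [h0]; exact Nat.zero_le _
      · have h1 : p ^ e ∣ Nat.fib M := pow_padicValNat_dvd
        have h2 : p ^ e ∣ Nat.fib (α * p ^ (e-1)) := by
          have h2' := pow_dvd_fib_rank p α hple hαpos hαdvd (e-1)
          rwa [Nat.sub_add_cancel hepos] at h2'
        have h3 : p ^ e ∣ Nat.fib (Nat.gcd M (α * p ^ (e-1))) := by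
          rw [Nat.fib_gcd]; exact Nat.dvd_gcd h1 h2
        have hgcd : Nat.gcd M (α * p ^ (e-1)) = α := by
          apply Nat.dvd_antisymm
          · have hco : Nat.Coprime (Nat.gcd M (α * p^(e-1))) (p^(e-1)) := by
              apply Nat.Coprime.coprime_dvd_left (Nat.gcd_dvd_left _ _)
              exact Nat.Coprime.pow_right _ (hp.coprime_iff_not_dvd.mpr hpM).symm
            exact Nat.Coprime.dvd_of_dvd_mul_right hco (Nat.gcd_dvd_right _ _)
          · exact Nat.dvd_gcd hαM (dvd_mul_right α _)
        rw [hgcd] at h3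
        exact (padicValNat_dvd_iff_le hfαne).mp h3
    · have hdvd : Nat.fib α ∣ Nat.fib M := Nat.fib_dvd α M hαM
      have hpow : p ^ padicValNat p (Nat.fib α) ∣ Nat.fib M := pow_padicValNat_dvd.trans hdvd
      exact (padicValNat_dvd_iff_le hfMne).mp hpow
  set r := (i + j) % (p - 1) with hr
  have hrlt : r < p - 1 := Nat.mod_lt _ (by omega)
  set M1 := p * (p * n + i) + j + 1 with hM1
  set M2 := p * n + r + 1 with hM2
  have hpM1 : ¬ p ∣ M1 := by
    intro hd
    have hj1 : p ∣ j + 1 := by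
      have e : M1 = p * (p*n+i) + (j+1) := by rw [hM1]; ring
      rw [e] at hd
      exact (Nat.dvd_add_right (Dvd.intro _ rfl)).mp hd
    have := Nat.le_of_dvd (by omega) hj1
    omega
  have hpM2 : ¬ p ∣ M2 := by
    intro hd
    have hr1 : p ∣ r + 1 := by
      have e : M2 = p * n + (r+1) := by rw [hM2]; ring
      rw [e] at hd
      exact (Nat.dvd_add_right (Dvd.intro _ rfl)).mp hd
    have := Nat.le_of_dvd (by omega) hr1
    omega
  have hp1α : ((p - 1 : ℕ) : ZMod α) = 0 := (ZMod.natCast_eq_zero_iff _ _).mpr hαp1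
  have hpα : ((p : ℕ) : ZMod α) = 1 := by
    have hp' : p = (p - 1) + 1 := by omega
    rw [hp', Nat.cast_add, hp1α, Nat.cast_one, zero_add]
  have hrij : ((r : ℕ) : ZMod α) = ((i : ℕ) : ZMod α) + ((j : ℕ) : ZMod α) := by
    have hdm := Nat.div_add_mod (i+j) (p-1)
    have hc := congrArg (Nat.cast : ℕ → ZMod α) hdm
    push_cast at hc
    rw [hp1α] at hc
    rw [← hr] at hc
    linear_combination hc
  have hM1M2 : ((M1 : ℕ) : ZMod α) = ((M2 : ℕ) : ZMod α) := by
    rw [hM1, hM2]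
    push_cast
    rw [hpα, hrij]
    ring
  have hiff : α ∣ M1 ↔ α ∣ M2 := by
    rw [← ZMod.natCast_eq_zero_iff, ← ZMod.natCast_eq_zero_iff, hM1M2]
  by_cases hc : α ∣ M1
  · rw [key M1 (by omega) hpM1 hc, key M2 (by omega) hpM2 (hiff.mp hc)]
  · rw [padicValNat.eq_zero_of_not_dvd, padicValNat.eq_zero_of_not_dvd]
    · intro hd; exact hc (hiff.mpr ((hrank M2 (by omega)).mp hd))
    · intro hd; exact hc ((hrank M1 (by omega)).mp hd)
end
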